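/- For any finite set A ⊆ ℝ^d and nonnegative integer k, the k-hull of A equals the intersection over all subsets B ⊆ A with |B| ≤ k of the convex hulls conv(A \ B). -/

import Mathlib

/-- The `k`-hull of `A ⊆ ℝ^d`: the intersection of all closed half-spaces that miss at
most `k` points of `A`. -/
noncomputable def kHull (d k : ℕ) (A : Set (EuclideanSpace ℝ (Fin d))) :
    Set (EuclideanSpace ℝ (Fin d)) :=
  ⋂₀ {H : Set (EuclideanSpace ℝ (Fin d)) |
      (∃ (u : EuclideanSpace ℝ (Fin d)) (c : ℝ), u ≠ 0 ∧
        H = {x : EuclideanSpace ℝ (Fin d) | (inner ℝ u x : ℝ) ≤ c}) ∧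
      (A \ H).ncard ≤ k}

/-- The `k`-hull of a finite set `A` equals the intersection of the convex
hulls `conv(A \ B)` over all subsets `B ⊆ A` with `|B| ≤ k`. -/
theorem stmt13 (d : ℕ) (hd : 1 ≤ d) (A : Set (EuclideanSpace ℝ (Fin d))) (hA : A.Finite)
    (k : ℕ) :
    kHull d k A =
      ⋂ B ∈ {B : Set (EuclideanSpace ℝ (Fin d)) | B ⊆ A ∧ B.ncard ≤ k},
        convexHull ℝ (A \ B) := by
  apply Set.Subset.antisymm
  · -- kHull ⊆ ⋂ conv
    intro x hx
    simp only [Set.mem_iInter, Set.mem_setOf_eq] at *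
    rintro B ⟨hBA, hBk⟩
    by_contra hxc
    have hfin : (A \ B).Finite := hA.subset Set.diff_subset
    by_cases hne : (A \ B).Nonempty
    · -- separate x from the compact convex hull
      have hcl : IsClosed (convexHull ℝ (A \ B)) :=
        (hfin.isCompact_convexHull ℝ).isClosed
      obtain ⟨f, c, hfs, hfx⟩ :=
        geometric_hahn_banach_closed_point (convex_convexHull ℝ (A \ B)) hcl hxc
      set u := (InnerProductSpace.toDual ℝ (EuclideanSpace ℝ (Fin d))).symm f with hu
      have hinner : ∀ y, (inner ℝ u y : ℝ) = f y := fun y =>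
        InnerProductSpace.toDual_symm_apply
      have hu0 : u ≠ 0 := by
        intro h0
        obtain ⟨a, ha⟩ := hne
        have h1 := hfs a (subset_convexHull ℝ _ ha)
        have h2 : f a = 0 := by rw [← hinner a, h0]; simp
        have h3 : f x = 0 := by rw [← hinner x, h0]; simp
        linarith
      have hH : x ∈ {y : EuclideanSpace ℝ (Fin d) | (inner ℝ u y : ℝ) ≤ c} := by
        apply hx
        constructor
        · exact ⟨u, c, hu0, rfl⟩
        · have hsub : A \ {y : EuclideanSpace ℝ (Fin d) | (inner ℝ u y : ℝ) ≤ c} ⊆ B := by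
            intro a ⟨haA, haH⟩
            by_contra haB
            have hlt : (inner ℝ u a : ℝ) ≤ c := by
              rw [hinner a]
              exact le_of_lt (hfs a (subset_convexHull ℝ _ ⟨haA, haB⟩))
            exact haH hlt
          calc (A \ _).ncard ≤ B.ncard := Set.ncard_le_ncard hsub (hA.subset hBA)
            _ ≤ k := hBk
      rw [Set.mem_setOf_eq, hinner x] at hH
      linarith
    · -- A \ B empty: A ⊆ B so A.ncard ≤ k, any halfspace qualifies
      have hAB : A ⊆ B := fun a ha => by
        by_contra h; exact hne ⟨a, ha, h⟩
      have hAk : A.ncard ≤ k := le_trans (Set.ncard_le_ncard hAB (hA.subset hBA)) hBk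
      set u : EuclideanSpace ℝ (Fin d) := EuclideanSpace.single ⟨0, hd⟩ 1 with hu
      have hu0 : u ≠ 0 := by
        intro h0
        have := congrArg (fun v : EuclideanSpace ℝ (Fin d) => v ⟨0, hd⟩) h0
        rw [hu, EuclideanSpace.single_apply] at this
        simp at this
      have hH : x ∈ {y : EuclideanSpace ℝ (Fin d) | (inner ℝ u y : ℝ) ≤ (inner ℝ u x : ℝ) - 1} := by
        apply hx
        exact ⟨⟨u, _, hu0, rfl⟩, le_trans (Set.ncard_le_ncard Set.diff_subset hA) hAk⟩
      rw [Set.mem_setOf_eq] at hH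
      linarith
  · -- ⋂ conv ⊆ kHull
    intro x hx
    simp only [Set.mem_iInter, Set.mem_setOf_eq] at hx
    rintro H ⟨⟨u, c, hu0, rfl⟩, hk⟩
    have hconv : Convex ℝ {y : EuclideanSpace ℝ (Fin d) | (inner ℝ u y : ℝ) ≤ c} :=
      convex_halfSpace_le (f := fun y => (inner ℝ u y : ℝ))
        (LinearMap.isLinear (innerSL ℝ u).toLinearMap) c
    have hBA : A \ {y : EuclideanSpace ℝ (Fin d) | (inner ℝ u y : ℝ) ≤ c} ⊆ A :=
      Set.diff_subset
    have := hx _ ⟨hBA, hk⟩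
    have hsub : A \ (A \ {y : EuclideanSpace ℝ (Fin d) | (inner ℝ u y : ℝ) ≤ c}) ⊆
        {y : EuclideanSpace ℝ (Fin d) | (inner ℝ u y : ℝ) ≤ c} := by
      intro a ⟨haA, ha⟩
      by_contra h
      exact ha ⟨haA, h⟩
    exact hconv.convexHull_subset_iff.mpr hsub this
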